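/- Let Ω_1,…,Ω_r ∈ Mat_n(ℂ[ħ][[q]]) be flat with Ω_a|_{q=0} independent of ħ, let μ ∈ Mat_n(ℂ) and w_1,…,w_r ∈ ℤ, set E := 2ħ·∂/∂ħ + Σ_b w_b·θ_b (acting entrywise), and suppose E(Ω_a) + μΩ_a − Ω_aμ = 2Ω_a for all a. Then the unique Q ∈ Mat_n(ℂ[ħ][[q]]) with Q|_{q=0} = Id for which every Ω̂_a := Q^{-1}Ω_aQ + ħQ^{-1}θ_aQ is independent of ħ additionally satisfies E(Q) + μQ − Qμ = 0, i.e. the canonical gauge transformation is degree-preserving. -/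

import Mathlib

/-!
Work over ℂ.  We represent the coefficient ring `ℂ[ħ,ħ⁻¹]]` (formal Laurent
series `Σ_{k ≤ K} c_k ħ^k` with finitely many positive powers of `ħ`) as
`LaurentSeries ℂ` in the variable `t = ħ⁻¹`; thus the coefficient of `t^k`
is the coefficient of `ħ^{-k}`.  `AA r = ℂ[ħ,ħ⁻¹]][[q¹,…,qʳ]]`, and
`θ_a = qᵃ·∂/∂qᵃ` is the logarithmic partial derivative.
-/

noncomputable section

/-- `ℂ[ħ,ħ⁻¹]]`, realized as Laurent series in `t = ħ⁻¹`. -/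
abbrev LS := LaurentSeries ℂ

/-- `ħ = t⁻¹` where `t` is the `LaurentSeries` variable. -/
def hbarL : LS := HahnSeries.single (-1 : ℤ) (1 : ℂ)

/-- `ℂ[ħ,ħ⁻¹]][[q¹,…,qʳ]]`. -/
abbrev AA (r : ℕ) := MvPowerSeries (Fin r) LS

/-- The logarithmic derivative `θ_a = qᵃ ∂/∂qᵃ`:
on the monomial `q^d` it acts by multiplication by `d a`. -/
def thetaA {r : ℕ} (a : Fin r) (x : AA r) : AA r := fun d => (d a : LS) * x d

/-- `θ_a` acting entrywise on matrices. -/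
def thetaMat {r n : ℕ} (a : Fin r) (M : Matrix (Fin n) (Fin n) (AA r)) :
    Matrix (Fin n) (Fin n) (AA r) :=
  Matrix.of fun i j => thetaA a (M i j)

/-- `ħ` as an element of `ℂ[ħ,ħ⁻¹]][[q]]`. -/
def hbarA (r : ℕ) : AA r := (MvPowerSeries.C : LS →+* AA r) hbarL

/-- The constant term at `q = 0`. -/
def ccA {r : ℕ} : AA r →+* LS := (MvPowerSeries.constantCoeff : AA r →+* LS)

/-- The embedding `ℂ → ℂ[ħ,ħ⁻¹]][[q]]`. -/
def cA (r : ℕ) : ℂ →+* AA r := (MvPowerSeries.C : LS →+* AA r).comp HahnSeries.C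

/-- `x ∈ ℂ[ħ]`: `x` is a polynomial in `ħ` (no negative powers of `ħ`,
i.e. no positive powers of `t`; finiteness is automatic for Laurent series). -/
def isPolyH (x : LS) : Prop := ∀ k : ℤ, 0 < k → x.coeff k = 0

/-- `x ∈ ℂ[[ħ⁻¹]]`: `x` is regular at `ħ = ∞` (no positive powers of `ħ`). -/
def isRegH (x : LS) : Prop := ∀ k : ℤ, k < 0 → x.coeff k = 0

/-- `x ∈ ℂ`: `x` is a constant, independent of `ħ`. -/
def isConstH (x : LS) : Prop := ∀ k : ℤ, k ≠ 0 → x.coeff k = 0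

/-- A matrix over `ℂ[ħ,ħ⁻¹]][[q]]` has entries in `ℂ[ħ][[q]]`. -/
def MatPolyH {r n : ℕ} (M : Matrix (Fin n) (Fin n) (AA r)) : Prop :=
  ∀ i j d, isPolyH (M i j d)

/-- A matrix over `ℂ[ħ,ħ⁻¹]][[q]]` has entries in `ℂ[[ħ⁻¹]][[q]]`. -/
def MatRegH {r n : ℕ} (M : Matrix (Fin n) (Fin n) (AA r)) : Prop :=
  ∀ i j d, isRegH (M i j d)

/-- A matrix over `ℂ[ħ,ħ⁻¹]][[q]]` has entries in `ℂ[[q]]`,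
i.e. is independent of `ħ`. -/
def MatConstH {r n : ℕ} (M : Matrix (Fin n) (Fin n) (AA r)) : Prop :=
  ∀ i j d, isConstH (M i j d)

/-- Flatness: `ħ(θ_aΩ_b − θ_bΩ_a) + Ω_aΩ_b − Ω_bΩ_a = 0` for all `a, b`. -/
def IsFlat {r n : ℕ} (Ω : Fin r → Matrix (Fin n) (Fin n) (AA r)) : Prop :=
  ∀ a b, hbarA r • (thetaMat a (Ω b) - thetaMat b (Ω a)) + (Ω a * Ω b - Ω b * Ω a) = 0

/-- Diagonal rescaling of a Laurent series: the coefficient of `ħ^{-k}`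
is multiplied by `f k`. -/
def scaleL (f : ℤ → ℂ) (x : LS) : LS :=
  ⟨fun k => f k * x.coeff k,
   x.isPWO_support'.mono (fun k hk => by
     simp only [Function.mem_support, ne_eq] at hk ⊢
     exact fun h => hk (by rw [h, mul_zero]))⟩

/-- Euler operator `E = 2ħ·∂/∂ħ + Σ_b w_b·θ_b`: on the monomial `ħ^j q^d`
(`= t^{-j} q^d`) it acts by multiplication by `2j + Σ_b w_b·d_b`. -/
def eulerA {r : ℕ} (w : Fin r → ℤ) (x : AA r) : AA r :=
  fun d => scaleL (fun k => (((∑ b, w b * (d b : ℤ)) - 2 * k : ℤ) : ℂ)) (x d)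

/-- The Euler operator acting entrywise on matrices. -/
def eulerMat {r n : ℕ} (w : Fin r → ℤ) (M : Matrix (Fin n) (Fin n) (AA r)) :
    Matrix (Fin n) (Fin n) (AA r) :=
  Matrix.of fun i j => eulerA w (M i j)

namespace CGG
open Finset HahnSeries

lemma scaleL_coeff (f : ℤ → ℂ) (x : LS) (k : ℤ) : (scaleL f x).coeff k = f k * x.coeff k := rfl

lemma scaleL_support (f : ℤ → ℂ) (x : LS) : (scaleL f x).support ⊆ x.support := by
  intro k hk
  simp only [HahnSeries.mem_support, scaleL_coeff] at hk ⊢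
  exact fun h => hk (by rw [h, mul_zero])

lemma scaleL_add (f : ℤ → ℂ) (x y : LS) : scaleL f (x + y) = scaleL f x + scaleL f y := by
  ext k; simp [scaleL_coeff, HahnSeries.coeff_add, mul_add]

lemma scaleL_zero (f : ℤ → ℂ) : scaleL f 0 = 0 := by
  ext k; simp [scaleL_coeff]

/-- `scaleL` bundled as an additive hom. -/
def scaleLHom (f : ℤ → ℂ) : LS →+ LS where
  toFun := scaleL f
  map_zero' := scaleL_zero f
  map_add' := scaleL_add f

lemma scaleL_mul (f g h : ℤ → ℂ) (H : ∀ i j : ℤ, h (i + j) = f i + g j) (x y : LS) :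
    scaleL h (x * y) = scaleL f x * y + x * scaleL g y := by
  ext k
  rw [HahnSeries.coeff_add, scaleL_coeff, HahnSeries.coeff_mul,
    HahnSeries.coeff_mul_left' x.isPWO_support (scaleL_support f x),
    HahnSeries.coeff_mul_right' y.isPWO_support (scaleL_support g y),
    Finset.mul_sum, ← Finset.sum_add_distrib]
  refine Finset.sum_congr rfl fun ij hij => ?_
  obtain ⟨-, -, hsum⟩ := Finset.mem_addAntidiagonal.mp hij
  rw [← hsum, H ij.1 ij.2, scaleL_coeff, scaleL_coeff]
  ring

lemma C_mul_coeff (c : ℂ) (x : LS) (k : ℤ) : (HahnSeries.C c * x).coeff k = c * x.coeff k := by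
  rw [HahnSeries.C_mul_eq_smul, HahnSeries.coeff_smul]; rfl

lemma natCast_mul_coeff (m : ℕ) (x : LS) (k : ℤ) :
    ((m : LS) * x).coeff k = (m : ℂ) * x.coeff k := by
  rw [← map_natCast (HahnSeries.C (R := ℂ) (Γ := ℤ)) m, C_mul_coeff]

lemma hbar_mul_coeff (x : LS) (k : ℤ) : (hbarL * x).coeff k = x.coeff (k + 1) := by
  have h : k = (k + 1) + (-1) := by ring
  rw [hbarL]
  conv_lhs => rw [h]
  rw [HahnSeries.coeff_single_mul_add, one_mul]

lemma scaleL_natCast_mul (f : ℤ → ℂ) (m : ℕ) (x : LS) :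
    scaleL f ((m : LS) * x) = (m : LS) * scaleL f x := by
  ext k; rw [scaleL_coeff, natCast_mul_coeff, natCast_mul_coeff, scaleL_coeff]; ring

lemma scaleL_C_mul (f : ℤ → ℂ) (c : ℂ) (x : LS) :
    scaleL f (HahnSeries.C c * x) = HahnSeries.C c * scaleL f x := by
  ext k; rw [scaleL_coeff, C_mul_coeff, C_mul_coeff, scaleL_coeff]; ring

lemma isConstH_eq_C {x : LS} (hx : isConstH x) : x = HahnSeries.C (x.coeff 0) := by
  ext k
  by_cases h : k = 0
  · subst h; simp [HahnSeries.C_apply, HahnSeries.coeff_single]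
  · rw [hx k h, HahnSeries.C_apply, HahnSeries.coeff_single_of_ne h]

lemma constH_mul_coeff {x : LS} (hx : isConstH x) (y : LS) (k : ℤ) :
    (x * y).coeff k = x.coeff 0 * y.coeff k := by
  conv_lhs => rw [isConstH_eq_C hx]
  rw [C_mul_coeff]

lemma mul_constH_coeff {y : LS} (hy : isConstH y) (x : LS) (k : ℤ) :
    (x * y).coeff k = x.coeff k * y.coeff 0 := by
  rw [mul_comm, constH_mul_coeff hy, mul_comm]

lemma isPolyH_zero : isPolyH (0 : LS) := fun k _ => rfl
lemma isPolyH_add {x y : LS} (hx : isPolyH x) (hy : isPolyH y) : isPolyH (x + y) := by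
  intro k hk; rw [HahnSeries.coeff_add, hx k hk, hy k hk, add_zero]
lemma isPolyH_neg {x : LS} (hx : isPolyH x) : isPolyH (-x) := by
  intro k hk; rw [HahnSeries.coeff_neg, hx k hk, neg_zero]
lemma isPolyH_sub {x y : LS} (hx : isPolyH x) (hy : isPolyH y) : isPolyH (x - y) := by
  rw [sub_eq_add_neg]; exact isPolyH_add hx (isPolyH_neg hy)
lemma isPolyH_mul {x y : LS} (hx : isPolyH x) (hy : isPolyH y) : isPolyH (x * y) := by
  intro k hk
  rw [HahnSeries.coeff_mul]
  refine Finset.sum_eq_zero fun ij hij => ?_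
  obtain ⟨-, -, hsum⟩ := Finset.mem_addAntidiagonal.mp hij
  rcases lt_or_ge 0 ij.1 with h | h
  · rw [hx _ h, zero_mul]
  · rw [hy _ (by omega), mul_zero]
lemma isPolyH_sum {ι : Type*} (s : Finset ι) (g : ι → LS) (h : ∀ i ∈ s, isPolyH (g i)) :
    isPolyH (∑ i ∈ s, g i) :=
  Finset.sum_induction g isPolyH (fun _ _ => isPolyH_add) isPolyH_zero h
lemma isPolyH_scaleL (f : ℤ → ℂ) {x : LS} (hx : isPolyH x) : isPolyH (scaleL f x) := by
  intro k hk; rw [scaleL_coeff, hx k hk, mul_zero]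
lemma isPolyH_one : isPolyH (1 : LS) := by
  intro k hk; rw [HahnSeries.coeff_one, if_neg (by omega)]

lemma isConstH_zero : isConstH (0 : LS) := fun k _ => rfl
lemma isConstH_add {x y : LS} (hx : isConstH x) (hy : isConstH y) : isConstH (x + y) := by
  intro k hk; rw [HahnSeries.coeff_add, hx k hk, hy k hk, add_zero]
lemma isConstH_neg {x : LS} (hx : isConstH x) : isConstH (-x) := by
  intro k hk; rw [HahnSeries.coeff_neg, hx k hk, neg_zero]
lemma isConstH_sub {x y : LS} (hx : isConstH x) (hy : isConstH y) : isConstH (x - y) := by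
  rw [sub_eq_add_neg]; exact isConstH_add hx (isConstH_neg hy)
lemma isConstH_sum {ι : Type*} (s : Finset ι) (g : ι → LS) (h : ∀ i ∈ s, isConstH (g i)) :
    isConstH (∑ i ∈ s, g i) :=
  Finset.sum_induction g isConstH (fun _ _ => isConstH_add) isConstH_zero h
lemma isConstH_scaleL (f : ℤ → ℂ) {x : LS} (hx : isConstH x) : isConstH (scaleL f x) := by
  intro k hk; rw [scaleL_coeff, hx k hk, mul_zero]
lemma isConstH_C_mul (c : ℂ) {x : LS} (hx : isConstH x) : isConstH (HahnSeries.C c * x) := by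
  intro k hk; rw [C_mul_coeff, hx k hk, mul_zero]
lemma isPolyH_C_mul (c : ℂ) {x : LS} (hx : isPolyH x) : isPolyH (HahnSeries.C c * x) := by
  intro k hk; rw [C_mul_coeff, hx k hk, mul_zero]

end CGG

namespace CGG
open Finset HahnSeries

variable {r : ℕ}

lemma AA_add_apply (x y : AA r) (d : Fin r →₀ ℕ) : (x + y) d = x d + y d := rfl
lemma AA_zero_apply (d : Fin r →₀ ℕ) : (0 : AA r) d = 0 := rfl
lemma AA_sub_apply (x y : AA r) (d : Fin r →₀ ℕ) : (x - y) d = x d - y d := rfl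
lemma AA_one_apply (d : Fin r →₀ ℕ) : (1 : AA r) d = if d = 0 then 1 else 0 :=
  MvPowerSeries.coeff_one d

lemma AA_mul_apply (x y : AA r) (d : Fin r →₀ ℕ) :
    (x * y) d = ∑ p ∈ Finset.HasAntidiagonal.antidiagonal d, x p.1 * y p.2 :=
  MvPowerSeries.coeff_mul (n := d) (φ := x) (ψ := y)

lemma AA_sum_apply {ι : Type*} (s : Finset ι) (g : ι → AA r) (d : Fin r →₀ ℕ) :
    (∑ i ∈ s, g i) d = ∑ i ∈ s, g i d := by
  classical
  induction s using Finset.induction with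
  | empty => rfl
  | insert _ _ h ih => rw [Finset.sum_insert h, Finset.sum_insert h, AA_add_apply, ih]

lemma AA_C_mul_apply (h : LS) (x : AA r) (d : Fin r →₀ ℕ) :
    ((MvPowerSeries.C : LS →+* AA r) h * x) d = h * x d :=
  MvPowerSeries.coeff_C_mul d x h

/-- The `q`-weight `Σ_b w_b d_b`. -/
def Wt (w : Fin r → ℤ) (d : Fin r →₀ ℕ) : ℤ := ∑ b, w b * (d b : ℤ)

lemma Wt_add (w : Fin r → ℤ) (e f : Fin r →₀ ℕ) : Wt w (e + f) = Wt w e + Wt w f := by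
  unfold Wt
  rw [← Finset.sum_add_distrib]
  refine Finset.sum_congr rfl fun b _ => ?_
  rw [Finsupp.add_apply]
  push_cast
  ring

lemma Wt_zero (w : Fin r → ℤ) : Wt w 0 = 0 := by simp [Wt]

lemma eulerA_apply (w : Fin r → ℤ) (x : AA r) (d : Fin r →₀ ℕ) :
    eulerA w x d = scaleL (fun k => ((Wt w d - 2 * k : ℤ) : ℂ)) (x d) := rfl

lemma thetaA_apply (a : Fin r) (x : AA r) (d : Fin r →₀ ℕ) :
    thetaA a x d = (d a : LS) * x d := rfl

lemma eulerA_add (w : Fin r → ℤ) (x y : AA r) :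
    eulerA w (x + y) = eulerA w x + eulerA w y := by
  funext d
  rw [AA_add_apply, eulerA_apply, eulerA_apply, eulerA_apply, AA_add_apply, scaleL_add]

lemma eulerA_sub (w : Fin r → ℤ) (x y : AA r) :
    eulerA w (x - y) = eulerA w x - eulerA w y := by
  have h := eulerA_add w (x - y) y
  rw [sub_add_cancel] at h
  rw [h]; abel

lemma thetaA_add (a : Fin r) (x y : AA r) :
    thetaA a (x + y) = thetaA a x + thetaA a y := by
  funext d
  rw [AA_add_apply, thetaA_apply, thetaA_apply, thetaA_apply, AA_add_apply, mul_add]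

lemma eulerA_sum {ι : Type*} (w : Fin r → ℤ) (s : Finset ι) (g : ι → AA r) :
    eulerA w (∑ i ∈ s, g i) = ∑ i ∈ s, eulerA w (g i) := by
  classical
  induction s using Finset.induction with
  | empty => funext d; rw [Finset.sum_empty, Finset.sum_empty]; exact scaleL_zero _
  | insert _ _ h ih => rw [Finset.sum_insert h, Finset.sum_insert h, eulerA_add, ih]

lemma thetaA_sum {ι : Type*} (a : Fin r) (s : Finset ι) (g : ι → AA r) :
    thetaA a (∑ i ∈ s, g i) = ∑ i ∈ s, thetaA a (g i) := by
  classical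
  induction s using Finset.induction with
  | empty => funext d; simp [thetaA_apply, AA_zero_apply, Finset.sum_empty]
  | insert _ _ h ih => rw [Finset.sum_insert h, Finset.sum_insert h, thetaA_add, ih]

lemma scaleL_sum {ι : Type*} (f : ℤ → ℂ) (s : Finset ι) (g : ι → LS) :
    scaleL f (∑ i ∈ s, g i) = ∑ i ∈ s, scaleL f (g i) :=
  map_sum (scaleLHom f) g s

lemma eulerA_mul (w : Fin r → ℤ) (x y : AA r) :
    eulerA w (x * y) = eulerA w x * y + x * eulerA w y := by
  funext d
  rw [AA_add_apply, eulerA_apply, AA_mul_apply, AA_mul_apply, AA_mul_apply,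
    ← Finset.sum_add_distrib, scaleL_sum]
  refine Finset.sum_congr rfl fun p hp => ?_
  have hps := Finset.HasAntidiagonal.mem_antidiagonal.mp hp
  show scaleL _ (x p.1 * y p.2) = _
  rw [eulerA_apply, eulerA_apply,
    scaleL_mul (fun k => ((Wt w p.1 - 2 * k : ℤ) : ℂ)) (fun k => ((Wt w p.2 - 2 * k : ℤ) : ℂ))
      _ (fun i j => by rw [← hps, Wt_add]; push_cast; ring)]

lemma thetaA_mul (a : Fin r) (x y : AA r) :
    thetaA a (x * y) = thetaA a x * y + x * thetaA a y := by
  funext d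
  rw [AA_add_apply, thetaA_apply, AA_mul_apply, AA_mul_apply, AA_mul_apply,
    Finset.mul_sum, ← Finset.sum_add_distrib]
  refine Finset.sum_congr rfl fun p hp => ?_
  have hps := Finset.HasAntidiagonal.mem_antidiagonal.mp hp
  show (d a : LS) * (x p.1 * y p.2) = (p.1 a : LS) * x p.1 * y p.2 + x p.1 * ((p.2 a : LS) * y p.2)
  have hda : (d a : LS) = (p.1 a : LS) + (p.2 a : LS) := by
    rw [← hps, Finsupp.add_apply]; push_cast; ring
  rw [hda]; ring

lemma eulerA_thetaA (w : Fin r → ℤ) (a : Fin r) (x : AA r) :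
    eulerA w (thetaA a x) = thetaA a (eulerA w x) := by
  funext d
  rw [eulerA_apply, thetaA_apply, thetaA_apply, eulerA_apply, scaleL_natCast_mul]

lemma eulerA_CC_mul (w : Fin r → ℤ) (c : ℂ) (x : AA r) :
    eulerA w ((MvPowerSeries.C : LS →+* AA r) (HahnSeries.C c) * x) =
      (MvPowerSeries.C : LS →+* AA r) (HahnSeries.C c) * eulerA w x := by
  funext d
  rw [eulerA_apply, AA_C_mul_apply, AA_C_mul_apply, eulerA_apply, scaleL_C_mul]

lemma thetaA_C_mul (a : Fin r) (h : LS) (x : AA r) :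
    thetaA a ((MvPowerSeries.C : LS →+* AA r) h * x) =
      (MvPowerSeries.C : LS →+* AA r) h * thetaA a x := by
  funext d
  rw [thetaA_apply, AA_C_mul_apply, AA_C_mul_apply, thetaA_apply]
  ring

lemma hbarA_eq (r : ℕ) : hbarA r = (MvPowerSeries.C : LS →+* AA r) hbarL := rfl

lemma eulerA_hbar_mul (w : Fin r → ℤ) (x : AA r) :
    eulerA w (hbarA r * x) = hbarA r * x + hbarA r * x + hbarA r * eulerA w x := by
  funext d
  ext k
  rw [AA_add_apply, AA_add_apply, HahnSeries.coeff_add, HahnSeries.coeff_add,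
    eulerA_apply, hbarA_eq, AA_C_mul_apply, AA_C_mul_apply hbarL (eulerA w x) d, scaleL_coeff,
    hbar_mul_coeff, hbar_mul_coeff, eulerA_apply, scaleL_coeff]
  push_cast
  ring

end CGG

namespace CGG
open Finset HahnSeries

variable {r n : ℕ}

lemma cA_eq (c : ℂ) : cA r c = (MvPowerSeries.C : LS →+* AA r) (HahnSeries.C c) := rfl

lemma cA_apply (c : ℂ) (d : Fin r →₀ ℕ) :
    cA r c d = if d = 0 then HahnSeries.C c else 0 := by
  rw [cA_eq]; exact MvPowerSeries.coeff_C d (HahnSeries.C c)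

lemma eulerA_cA (w : Fin r → ℤ) (c : ℂ) : eulerA w (cA r c : AA r) = 0 := by
  funext d
  rw [eulerA_apply, cA_apply]
  by_cases hd : d = 0
  · subst hd
    ext k
    rw [if_pos rfl, scaleL_coeff, AA_zero_apply]
    by_cases hk : k = 0
    · subst hk; rw [Wt_zero]; norm_num
    · rw [HahnSeries.C_apply, HahnSeries.coeff_single_of_ne hk]
      simp
  · rw [if_neg hd, scaleL_zero]; rfl

lemma thetaA_cA (a : Fin r) (c : ℂ) : thetaA a (cA r c : AA r) = 0 := by
  funext d
  rw [thetaA_apply, cA_apply]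
  by_cases hd : d = 0
  · subst hd
    rw [if_pos rfl]
    simp only [Finsupp.coe_zero, Pi.zero_apply, Nat.cast_zero, zero_mul]
    rfl
  · rw [if_neg hd, mul_zero]; rfl

-- entry lemmas
lemma eulerMat_apply (w : Fin r → ℤ) (M : Matrix (Fin n) (Fin n) (AA r)) (i j : Fin n) :
    eulerMat w M i j = eulerA w (M i j) := rfl
lemma thetaMat_apply (a : Fin r) (M : Matrix (Fin n) (Fin n) (AA r)) (i j : Fin n) :
    thetaMat a M i j = thetaA a (M i j) := rfl

lemma eulerMat_add (w : Fin r → ℤ) (M N : Matrix (Fin n) (Fin n) (AA r)) :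
    eulerMat w (M + N) = eulerMat w M + eulerMat w N := by
  refine Matrix.ext fun i j => ?_
  rw [Matrix.add_apply, eulerMat_apply, Matrix.add_apply, eulerMat_apply, eulerMat_apply,
    eulerA_add]

lemma eulerMat_sub (w : Fin r → ℤ) (M N : Matrix (Fin n) (Fin n) (AA r)) :
    eulerMat w (M - N) = eulerMat w M - eulerMat w N := by
  refine Matrix.ext fun i j => ?_
  rw [Matrix.sub_apply, eulerMat_apply, Matrix.sub_apply, eulerMat_apply, eulerMat_apply,
    eulerA_sub]

lemma thetaMat_add (a : Fin r) (M N : Matrix (Fin n) (Fin n) (AA r)) :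
    thetaMat a (M + N) = thetaMat a M + thetaMat a N := by
  refine Matrix.ext fun i j => ?_
  rw [Matrix.add_apply, thetaMat_apply, Matrix.add_apply, thetaMat_apply, thetaMat_apply,
    thetaA_add]

lemma eulerMat_mul (w : Fin r → ℤ) (M N : Matrix (Fin n) (Fin n) (AA r)) :
    eulerMat w (M * N) = eulerMat w M * N + M * eulerMat w N := by
  refine Matrix.ext fun i j => ?_
  rw [Matrix.add_apply, eulerMat_apply, Matrix.mul_apply, Matrix.mul_apply, Matrix.mul_apply,
    eulerA_sum, ← Finset.sum_add_distrib]
  exact Finset.sum_congr rfl fun l _ => by rw [eulerA_mul, eulerMat_apply, eulerMat_apply]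

lemma thetaMat_mul (a : Fin r) (M N : Matrix (Fin n) (Fin n) (AA r)) :
    thetaMat a (M * N) = thetaMat a M * N + M * thetaMat a N := by
  refine Matrix.ext fun i j => ?_
  rw [Matrix.add_apply, thetaMat_apply, Matrix.mul_apply, Matrix.mul_apply, Matrix.mul_apply,
    thetaA_sum, ← Finset.sum_add_distrib]
  exact Finset.sum_congr rfl fun l _ => by rw [thetaA_mul, thetaMat_apply, thetaMat_apply]

lemma eulerMat_theta (w : Fin r → ℤ) (a : Fin r) (M : Matrix (Fin n) (Fin n) (AA r)) :
    eulerMat w (thetaMat a M) = thetaMat a (eulerMat w M) := by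
  refine Matrix.ext fun i j => ?_
  rw [eulerMat_apply, thetaMat_apply, thetaMat_apply, eulerMat_apply, eulerA_thetaA]

lemma eulerMat_smulH (w : Fin r → ℤ) (M : Matrix (Fin n) (Fin n) (AA r)) :
    eulerMat w (hbarA r • M) =
      hbarA r • M + hbarA r • M + hbarA r • eulerMat w M := by
  refine Matrix.ext fun i j => ?_
  simp only [Matrix.add_apply, Matrix.smul_apply, eulerMat_apply, smul_eq_mul, eulerA_hbar_mul]

lemma thetaMat_smulH (a : Fin r) (M : Matrix (Fin n) (Fin n) (AA r)) :
    thetaMat a (hbarA r • M) = hbarA r • thetaMat a M := by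
  refine Matrix.ext fun i j => ?_
  simp only [thetaMat_apply, Matrix.smul_apply, smul_eq_mul, hbarA_eq, thetaA_C_mul]

lemma eulerMat_nu (w : Fin r → ℤ) (μ : Matrix (Fin n) (Fin n) ℂ) :
    eulerMat w (μ.map (cA r)) = 0 := by
  refine Matrix.ext fun i j => ?_
  rw [eulerMat_apply, Matrix.map_apply, eulerA_cA]
  rfl

lemma thetaMat_nu (a : Fin r) (μ : Matrix (Fin n) (Fin n) ℂ) :
    thetaMat a (μ.map (cA r)) = 0 := by
  refine Matrix.ext fun i j => ?_
  rw [thetaMat_apply, Matrix.map_apply, thetaA_cA]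
  rfl

-- coefq
def coefq (M : Matrix (Fin n) (Fin n) (AA r)) (d : Fin r →₀ ℕ) : Matrix (Fin n) (Fin n) LS :=
  Matrix.of fun i j => M i j d

lemma coefq_apply (M : Matrix (Fin n) (Fin n) (AA r)) (d : Fin r →₀ ℕ) (i j : Fin n) :
    coefq M d i j = M i j d := rfl

lemma coefq_add (M N : Matrix (Fin n) (Fin n) (AA r)) (d : Fin r →₀ ℕ) :
    coefq (M + N) d = coefq M d + coefq N d := by
  refine Matrix.ext fun i j => ?_
  rw [Matrix.add_apply, coefq_apply, Matrix.add_apply, coefq_apply, coefq_apply, AA_add_apply]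

lemma coefq_sub (M N : Matrix (Fin n) (Fin n) (AA r)) (d : Fin r →₀ ℕ) :
    coefq (M - N) d = coefq M d - coefq N d := by
  refine Matrix.ext fun i j => ?_
  rw [Matrix.sub_apply, coefq_apply, Matrix.sub_apply, coefq_apply, coefq_apply, AA_sub_apply]

lemma coefq_one (d : Fin r →₀ ℕ) :
    coefq (1 : Matrix (Fin n) (Fin n) (AA r)) d = if d = 0 then 1 else 0 := by
  refine Matrix.ext fun i j => ?_
  rw [coefq_apply]
  by_cases hd : d = 0
  · subst hd
    rw [if_pos rfl]
    by_cases hij : i = j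
    · subst hij; rw [Matrix.one_apply_eq, Matrix.one_apply_eq, AA_one_apply, if_pos rfl]
    · rw [Matrix.one_apply_ne hij, Matrix.one_apply_ne hij, AA_zero_apply]
  · rw [if_neg hd]
    by_cases hij : i = j
    · subst hij; rw [Matrix.one_apply_eq, AA_one_apply, if_neg hd, Matrix.zero_apply]
    · rw [Matrix.one_apply_ne hij, Matrix.zero_apply, AA_zero_apply]

lemma coefq_mul (M N : Matrix (Fin n) (Fin n) (AA r)) (d : Fin r →₀ ℕ) :
    coefq (M * N) d = ∑ p ∈ Finset.HasAntidiagonal.antidiagonal d, coefq M p.1 * coefq N p.2 := by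
  refine Matrix.ext fun i j => ?_
  rw [coefq_apply, Matrix.mul_apply, AA_sum_apply, Matrix.sum_apply]
  calc (∑ l, (M i l * N l j) d)
      = ∑ l, ∑ p ∈ Finset.HasAntidiagonal.antidiagonal d, M i l p.1 * N l j p.2 :=
        Finset.sum_congr rfl fun l _ => AA_mul_apply _ _ _
    _ = ∑ p ∈ Finset.HasAntidiagonal.antidiagonal d, ∑ l, M i l p.1 * N l j p.2 := Finset.sum_comm
    _ = ∑ p ∈ Finset.HasAntidiagonal.antidiagonal d, (coefq M p.1 * coefq N p.2) i j :=
        Finset.sum_congr rfl fun p _ => by rw [Matrix.mul_apply]; rfl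

lemma coefq_smulH (M : Matrix (Fin n) (Fin n) (AA r)) (d : Fin r →₀ ℕ) :
    coefq (hbarA r • M) d = hbarL • coefq M d := by
  refine Matrix.ext fun i j => ?_
  rw [coefq_apply, Matrix.smul_apply, Matrix.smul_apply, smul_eq_mul, hbarA_eq,
    AA_C_mul_apply, coefq_apply, smul_eq_mul]

lemma coefq_theta (a : Fin r) (M : Matrix (Fin n) (Fin n) (AA r)) (d : Fin r →₀ ℕ) :
    coefq (thetaMat a M) d = ((d a : ℕ) : LS) • coefq M d := by
  refine Matrix.ext fun i j => ?_
  rw [coefq_apply, thetaMat_apply, thetaA_apply, Matrix.smul_apply, coefq_apply, smul_eq_mul]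

-- predicate closure at matrix level
lemma matPolyH_mul {M N : Matrix (Fin n) (Fin n) (AA r)} (hM : MatPolyH M) (hN : MatPolyH N) :
    MatPolyH (M * N) := by
  intro i j d
  rw [Matrix.mul_apply, AA_sum_apply]
  refine isPolyH_sum _ _ fun l _ => ?_
  rw [AA_mul_apply]
  exact isPolyH_sum _ _ fun p _ => isPolyH_mul (hM i l p.1) (hN l j p.2)

lemma matPolyH_add {M N : Matrix (Fin n) (Fin n) (AA r)} (hM : MatPolyH M) (hN : MatPolyH N) :
    MatPolyH (M + N) := by
  intro i j d
  rw [Matrix.add_apply, AA_add_apply]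
  exact isPolyH_add (hM i j d) (hN i j d)

lemma matPolyH_sub {M N : Matrix (Fin n) (Fin n) (AA r)} (hM : MatPolyH M) (hN : MatPolyH N) :
    MatPolyH (M - N) := by
  intro i j d
  rw [Matrix.sub_apply, AA_sub_apply]
  exact isPolyH_sub (hM i j d) (hN i j d)

lemma matPolyH_euler (w : Fin r → ℤ) {M : Matrix (Fin n) (Fin n) (AA r)} (hM : MatPolyH M) :
    MatPolyH (eulerMat w M) := by
  intro i j d
  rw [eulerMat_apply, eulerA_apply]
  exact isPolyH_scaleL _ (hM i j d)

lemma matPolyH_nu (μ : Matrix (Fin n) (Fin n) ℂ) : MatPolyH (μ.map (cA r)) := by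
  intro i j d
  rw [Matrix.map_apply, cA_apply]
  by_cases hd : d = 0
  · rw [if_pos hd]
    intro k hk
    rw [HahnSeries.C_apply, HahnSeries.coeff_single_of_ne (by omega)]
  · rw [if_neg hd]; exact isPolyH_zero

lemma matConstH_add {M N : Matrix (Fin n) (Fin n) (AA r)} (hM : MatConstH M) (hN : MatConstH N) :
    MatConstH (M + N) := by
  intro i j d
  rw [Matrix.add_apply, AA_add_apply]
  exact isConstH_add (hM i j d) (hN i j d)

lemma matConstH_sub {M N : Matrix (Fin n) (Fin n) (AA r)} (hM : MatConstH M) (hN : MatConstH N) :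
    MatConstH (M - N) := by
  intro i j d
  rw [Matrix.sub_apply, AA_sub_apply]
  exact isConstH_sub (hM i j d) (hN i j d)

lemma matConstH_euler (w : Fin r → ℤ) {M : Matrix (Fin n) (Fin n) (AA r)} (hM : MatConstH M) :
    MatConstH (eulerMat w M) := by
  intro i j d
  rw [eulerMat_apply, eulerA_apply]
  exact isConstH_scaleL _ (hM i j d)

lemma matConstH_nu_mul (μ : Matrix (Fin n) (Fin n) ℂ) {M : Matrix (Fin n) (Fin n) (AA r)}
    (hM : MatConstH M) : MatConstH (μ.map (cA r) * M) := by
  intro i j d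
  rw [Matrix.mul_apply, AA_sum_apply]
  refine isConstH_sum _ _ fun l _ => ?_
  rw [Matrix.map_apply, cA_eq, AA_C_mul_apply]
  exact isConstH_C_mul _ (hM l j d)

lemma matConstH_mul_nu (μ : Matrix (Fin n) (Fin n) ℂ) {M : Matrix (Fin n) (Fin n) (AA r)}
    (hM : MatConstH M) : MatConstH (M * μ.map (cA r)) := by
  intro i j d
  rw [Matrix.mul_apply, AA_sum_apply]
  refine isConstH_sum _ _ fun l _ => ?_
  have : M i l * (μ.map (cA r)) l j = (μ.map (cA r)) l j * M i l := mul_comm _ _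
  rw [this, Matrix.map_apply, cA_eq, AA_C_mul_apply]
  exact isConstH_C_mul _ (hM i l d)

lemma matPolyH_nu_mul (μ : Matrix (Fin n) (Fin n) ℂ) {M : Matrix (Fin n) (Fin n) (AA r)}
    (hM : MatPolyH M) : MatPolyH (μ.map (cA r) * M) :=
  matPolyH_mul (matPolyH_nu μ) hM

lemma matPolyH_mul_nu (μ : Matrix (Fin n) (Fin n) ℂ) {M : Matrix (Fin n) (Fin n) (AA r)}
    (hM : MatPolyH M) : MatPolyH (M * μ.map (cA r)) :=
  matPolyH_mul hM (matPolyH_nu μ)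

end CGG

namespace CGG
open Finset HahnSeries

variable {r n : ℕ}

lemma LS_sum_coeff {ι : Type*} (s : Finset ι) (g : ι → LS) (k : ℤ) :
    (∑ i ∈ s, g i).coeff k = ∑ i ∈ s, (g i).coeff k := by
  classical
  induction s using Finset.induction with
  | empty => simp
  | insert _ _ h ih => rw [Finset.sum_insert h, Finset.sum_insert h, HahnSeries.coeff_add, ih]

/-- total degree of a multi-exponent -/
def degF {r : ℕ} (d : Fin r →₀ ℕ) : ℕ := d.sum fun _ k => k

lemma degF_add (e f : Fin r →₀ ℕ) : degF (e + f) = degF e + degF f :=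
  Finsupp.sum_add_index' (fun _ => rfl) (fun _ _ _ => rfl)

lemma degF_pos {e : Fin r →₀ ℕ} (he : e ≠ 0) : 0 < degF e := by
  obtain ⟨a, ha⟩ : ∃ a, e a ≠ 0 := by
    by_contra h
    push_neg at h
    exact he (Finsupp.ext fun a => h a)
  calc (0 : ℕ) < e a := Nat.pos_of_ne_zero ha
    _ ≤ degF e := Finset.single_le_sum (f := fun a => e a) (fun _ _ => Nat.zero_le _)
        (Finsupp.mem_support_iff.mpr ha)

lemma degF_eq_zero {d : Fin r →₀ ℕ} (h : degF d = 0) : d = 0 := by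
  by_contra hd
  have := degF_pos hd
  omega

lemma matrix_rec_vanish (A S R : Matrix (Fin n) (Fin n) LS) (c : ℕ) (hc : c ≠ 0)
    (hA : ∀ i j, isConstH (A i j)) (hR : ∀ i j, isConstH (R i j))
    (hS : ∀ i j, isPolyH (S i j))
    (heq : A * S + hbarL • ((c : LS) • S) = S * A + R) : S = 0 := by
  classical
  set Cm : ℤ → Matrix (Fin n) (Fin n) ℂ := fun k => Matrix.of fun i j => (S i j).coeff k with hCm
  set A0 : Matrix (Fin n) (Fin n) ℂ := Matrix.of fun i j => (A i j).coeff 0 with hA0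
  have hrec : ∀ k : ℤ, k ≠ 0 → A0 * Cm k + (c : ℂ) • Cm (k + 1) = Cm k * A0 := by
    intro k hk
    refine Matrix.ext fun i j => ?_
    have h := congrArg (fun X : Matrix (Fin n) (Fin n) LS => (X i j).coeff k) heq
    simp only [Matrix.add_apply, HahnSeries.coeff_add, Matrix.mul_apply, LS_sum_coeff,
      Matrix.smul_apply] at h
    have hL : ∀ l, (A i l * S l j).coeff k = (A i l).coeff 0 * (S l j).coeff k :=
      fun l => constH_mul_coeff (hA i l) _ k
    have hRr : ∀ l, (S i l * A l j).coeff k = (S i l).coeff k * (A l j).coeff 0 :=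
      fun l => mul_constH_coeff (hA l j) _ k
    have hsm : (hbarL • ((c : LS) • S i j)).coeff k = (c : ℂ) * (S i j).coeff (k + 1) := by
      rw [smul_eq_mul, smul_eq_mul, hbar_mul_coeff, natCast_mul_coeff]
    rw [Finset.sum_congr rfl (fun l _ => hL l), Finset.sum_congr rfl (fun l _ => hRr l),
      hsm, hR i j k hk, add_zero] at h
    simp only [Matrix.add_apply, Matrix.mul_apply, Matrix.smul_apply, smul_eq_mul]
    exact h
  -- lower bound on supports
  obtain ⟨b, hb⟩ := (Set.finite_range (fun p : Fin n × Fin n => (S p.1 p.2).order)).bddBelow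
  have hlow : ∀ k : ℤ, k < b → Cm k = 0 := by
    intro k hk
    refine Matrix.ext fun i j => ?_
    rw [Matrix.zero_apply]
    exact HahnSeries.coeff_eq_zero_of_lt_order
      (lt_of_lt_of_le hk (hb (Set.mem_range_self (i, j))))
  have main : ∀ m : ℤ, b - 1 ≤ m → m ≤ 0 → Cm m = 0 := by
    refine Int.le_induction ?_ ?_
    · intro _; exact hlow _ (by omega)
    · intro m hm ih hm1
      have h0 : Cm m = 0 := ih (by omega)
      have h1 := hrec m (by omega)
      rw [h0, mul_zero, zero_mul, zero_add] at h1
      refine Matrix.ext fun i j => ?_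
      have h2 := congrArg (fun X : Matrix (Fin n) (Fin n) ℂ => X i j) h1
      simp only [Matrix.smul_apply, Matrix.zero_apply, smul_eq_mul] at h2
      rw [Matrix.zero_apply]
      rcases mul_eq_zero.mp h2 with h | h
      · exact absurd h (Nat.cast_ne_zero.mpr hc)
      · exact h
  have hall : ∀ k : ℤ, Cm k = 0 := by
    intro k
    rcases lt_or_ge k b with h | h
    · exact hlow k h
    · rcases le_or_gt k 0 with h0 | h0
      · exact main k (by omega) h0
      · refine Matrix.ext fun i j => ?_
        rw [Matrix.zero_apply]
        exact hS i j k h0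
  refine Matrix.ext fun i j => ?_
  rw [Matrix.zero_apply]
  ext k
  have := congrArg (fun X : Matrix (Fin n) (Fin n) ℂ => X i j) (hall k)
  exact this

end CGG

namespace CGG
open Finset HahnSeries

variable {r n : ℕ}

lemma main_vanish (Ωh Rm : Fin r → Matrix (Fin n) (Fin n) (AA r))
    (hΩh : ∀ a, MatConstH (Ωh a)) (hRm : ∀ a, MatConstH (Rm a))
    (T : Matrix (Fin n) (Fin n) (AA r)) (hT : MatPolyH T)
    (hT0 : coefq T 0 = 0)
    (heq : ∀ a, Ωh a * T + hbarA r • thetaMat a T = T * Ωh a + Rm a) :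
    T = 0 := by
  classical
  have key : ∀ m : ℕ, ∀ d, degF d ≤ m → coefq T d = 0 := by
    intro m
    induction m with
    | zero =>
      intro d hd
      have : d = 0 := degF_eq_zero (Nat.le_zero.mp hd)
      rwa [this]
    | succ m ih =>
      intro d hd
      by_cases hd0 : d = 0
      · rwa [hd0]
      obtain ⟨a, ha⟩ : ∃ a, d a ≠ 0 := by
        by_contra hcon
        push_neg at hcon
        exact hd0 (Finsupp.ext fun a => hcon a)
      have h := congrArg (fun X => coefq X d) (heq a)
      rw [coefq_add, coefq_add, coefq_mul, coefq_mul, coefq_smulH, coefq_theta] at h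
      have h1 : ∑ p ∈ Finset.HasAntidiagonal.antidiagonal d, coefq (Ωh a) p.1 * coefq T p.2
          = coefq (Ωh a) 0 * coefq T d := by
        refine Finset.sum_eq_single_of_mem ((0 : Fin r →₀ ℕ), d)
          (Finset.HasAntidiagonal.mem_antidiagonal.mpr (zero_add d)) ?_
        intro p hp hne
        obtain ⟨p1, p2⟩ := p
        have hps := Finset.HasAntidiagonal.mem_antidiagonal.mp hp
        by_cases hcon : p2 = d
        · subst hcon
          have h1 : p1 = 0 := by
            have h2 : p1 + p2 = 0 + p2 := by rw [zero_add]; exact hps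
            exact add_right_cancel h2
          subst h1
          exact absurd rfl hne
        · have hp1 : p1 ≠ 0 := fun hcon2 => hcon (by rwa [hcon2, zero_add] at hps)
          have hdeg := degF_add p1 p2
          rw [hps] at hdeg
          have hpos := degF_pos hp1
          rw [ih p2 (by omega), mul_zero]
      have h2 : ∑ p ∈ Finset.HasAntidiagonal.antidiagonal d, coefq T p.1 * coefq (Ωh a) p.2
          = coefq T d * coefq (Ωh a) 0 := by
        refine Finset.sum_eq_single_of_mem (d, (0 : Fin r →₀ ℕ))
          (Finset.HasAntidiagonal.mem_antidiagonal.mpr (add_zero d)) ?_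
        intro p hp hne
        obtain ⟨p1, p2⟩ := p
        have hps := Finset.HasAntidiagonal.mem_antidiagonal.mp hp
        by_cases hcon : p1 = d
        · subst hcon
          have h1 : p2 = 0 := by
            have h2 : p1 + p2 = p1 + 0 := by rw [add_zero]; exact hps
            exact add_left_cancel h2
          subst h1
          exact absurd rfl hne
        · have hp2 : p2 ≠ 0 := fun hcon2 => hcon (by rwa [hcon2, add_zero] at hps)
          have hdeg := degF_add p1 p2
          rw [hps] at hdeg
          have hpos := degF_pos hp2
          rw [ih p1 (by omega), zero_mul]
      rw [h1, h2] at h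
      exact matrix_rec_vanish (coefq (Ωh a) 0) (coefq T d) (coefq (Rm a) d) (d a) ha
        (fun i j => hΩh a i j 0) (fun i j => hRm a i j d) (fun i j => hT i j d) h
  refine Matrix.ext fun i j => ?_
  rw [Matrix.zero_apply]
  refine MvPowerSeries.ext fun d => ?_
  have := congrArg (fun M : Matrix (Fin n) (Fin n) LS => M i j) (key (degF d) d le_rfl)
  exact this

lemma matPolyH_inverse (Q P : Matrix (Fin n) (Fin n) (AA r))
    (hQpoly : MatPolyH Q) (hQ0 : coefq Q 0 = 1) (hPQ : P * Q = 1) : MatPolyH P := by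
  classical
  have key : ∀ m : ℕ, ∀ d, degF d = m → ∀ i j, isPolyH (P i j d) := by
    intro m
    induction m using Nat.strong_induction_on with
    | _ m ih =>
      intro d hdm i j
      have h := congrArg (fun X => coefq X d) hPQ
      rw [coefq_mul, coefq_one] at h
      have hmem : (d, (0 : Fin r →₀ ℕ)) ∈ Finset.HasAntidiagonal.antidiagonal d :=
        Finset.HasAntidiagonal.mem_antidiagonal.mpr (add_zero d)
      have hsplit := (Finset.add_sum_erase (Finset.HasAntidiagonal.antidiagonal d)
        (fun p => coefq P p.1 * coefq Q p.2) hmem).symm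
      have hPd : coefq P d = (if d = 0 then 1 else 0)
          - ∑ p ∈ (Finset.HasAntidiagonal.antidiagonal d).erase (d, (0 : Fin r →₀ ℕ)),
              coefq P p.1 * coefq Q p.2 := by
        have h2 := hsplit.symm.trans h
        simp only [hQ0, mul_one] at h2
        exact eq_sub_of_add_eq h2
      have hent := congrArg (fun M : Matrix (Fin n) (Fin n) LS => M i j) hPd
      simp only [Matrix.sub_apply, Matrix.sum_apply] at hent
      show isPolyH (coefq P d i j)
      rw [hent]
      refine isPolyH_sub ?_ ?_
      · by_cases hd0 : d = 0
        · rw [if_pos hd0]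
          by_cases hij : i = j
          · subst hij; rw [Matrix.one_apply_eq]; exact isPolyH_one
          · rw [Matrix.one_apply_ne hij]; exact isPolyH_zero
        · rw [if_neg hd0, Matrix.zero_apply]; exact isPolyH_zero
      · refine isPolyH_sum _ _ fun p hp => ?_
        rw [Matrix.mul_apply]
        refine isPolyH_sum _ _ fun l _ => ?_
        have hpmem := Finset.mem_erase.mp hp
        have hps := Finset.HasAntidiagonal.mem_antidiagonal.mp hpmem.2
        have hp2 : p.2 ≠ 0 := by
          intro hcon
          apply hpmem.1
          rw [Prod.ext_iff]
          exact ⟨by rwa [hcon, add_zero] at hps, hcon⟩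
        have hdeg := degF_add p.1 p.2
        rw [hps] at hdeg
        have hpos := degF_pos hp2
        exact isPolyH_mul (ih (degF p.1) (by omega) p.1 rfl i l) (hQpoly l j p.2)
  intro i j d
  exact key (degF d) d rfl i j

end CGG

namespace CGG
open Finset HahnSeries

variable {r n : ℕ}

lemma thetaA_sub (a : Fin r) (x y : AA r) :
    thetaA a (x - y) = thetaA a x - thetaA a y := by
  have h := thetaA_add a (x - y) y
  rw [sub_add_cancel] at h
  rw [h]; abel

lemma thetaMat_sub (a : Fin r) (M N : Matrix (Fin n) (Fin n) (AA r)) :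
    thetaMat a (M - N) = thetaMat a M - thetaMat a N := by
  refine Matrix.ext fun i j => ?_
  rw [Matrix.sub_apply, thetaMat_apply, Matrix.sub_apply, thetaMat_apply, thetaMat_apply,
    thetaA_sub]

lemma coefq_mul_zero (M N : Matrix (Fin n) (Fin n) (AA r)) :
    coefq (M * N) 0 = coefq M 0 * coefq N 0 := by
  rw [coefq_mul, Finset.HasAntidiagonal.antidiagonal_zero, Finset.sum_singleton]

lemma coefq_euler_zero (w : Fin r → ℤ) {Q : Matrix (Fin n) (Fin n) (AA r)}
    (hQ0 : coefq Q 0 = 1) : coefq (eulerMat w Q) 0 = 0 := by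
  refine Matrix.ext fun i j => ?_
  rw [Matrix.zero_apply, coefq_apply, eulerMat_apply, eulerA_apply]
  have hQij : Q i j 0 = (1 : Matrix (Fin n) (Fin n) LS) i j :=
    congrArg (fun M : Matrix (Fin n) (Fin n) LS => M i j) hQ0
  rw [hQij]
  ext k
  rw [scaleL_coeff, HahnSeries.coeff_zero]
  by_cases hij : i = j
  · subst hij
    rw [Matrix.one_apply_eq, HahnSeries.coeff_one]
    by_cases hk : k = 0
    · subst hk; rw [Wt_zero]; norm_num
    · rw [if_neg hk]; ring
  · rw [Matrix.one_apply_ne hij]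
    simp

lemma mulH_smul (h : AA r) (M N : Matrix (Fin n) (Fin n) (AA r)) :
    M * (h • N) = h • (M * N) := Matrix.mul_smul M h N

lemma smulH_mul (h : AA r) (M N : Matrix (Fin n) (Fin n) (AA r)) :
    (h • M) * N = h • (M * N) := Matrix.smul_mul h M N

lemma smulH_add (h : AA r) (M N : Matrix (Fin n) (Fin n) (AA r)) :
    h • (M + N) = h • M + h • N := smul_add h M N

lemma smulH_sub (h : AA r) (M N : Matrix (Fin n) (Fin n) (AA r)) :
    h • (M - N) = h • M - h • N := smul_sub h M N

end CGG

open CGG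

/-- **The canonical gauge transformation is degree-preserving** (graded
canonical frame Theorem).  Let `Ω_a ∈ Mat_n(ℂ[ħ][[q]])` be flat with
`Ω_a|_{q=0}` independent of `ħ`, and of degree 2: `E(Ω_a) + [μ, Ω_a] = 2Ω_a`
for `E = 2ħ∂/∂ħ + Σ_b w_b θ_b` and `μ ∈ Mat_n(ℂ)`.  Then the unique
`Q ∈ Mat_n(ℂ[ħ][[q]])` with `Q|_{q=0} = Id` making every
`Ω̂_a = Q⁻¹Ω_aQ + ħQ⁻¹θ_aQ` independent of `ħ` satisfies `E(Q) + [μ, Q] = 0`. -/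
theorem canonical_gauge_graded {r n : ℕ} (hr : 1 ≤ r) (hn : 1 ≤ n)
    (Ω : Fin r → Matrix (Fin n) (Fin n) (AA r))
    (hpoly : ∀ a, MatPolyH (Ω a))
    (hflat : IsFlat Ω)
    (hcc : ∀ a i j, isConstH (ccA (Ω a i j)))
    (μ : Matrix (Fin n) (Fin n) ℂ) (w : Fin r → ℤ)
    (hgrade : ∀ a, eulerMat w (Ω a) + μ.map (cA r) * Ω a - Ω a * μ.map (cA r)
      = Ω a + Ω a)
    (Q : Matrix (Fin n) (Fin n) (AA r))
    (hQpoly : MatPolyH Q) (hQcc : Q.map ccA = 1)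
    (hQgauge : ∀ a, MatConstH
      (Ring.inverse Q * Ω a * Q + hbarA r • (Ring.inverse Q * thetaMat a Q))) :
    eulerMat w Q + μ.map (cA r) * Q - Q * μ.map (cA r) = 0 := by
  classical
  obtain ⟨ν, hν⟩ : ∃ M : Matrix (Fin n) (Fin n) (AA r), M = μ.map (cA r) := ⟨_, rfl⟩
  rw [← hν]
  rw [← hν] at hgrade
  obtain ⟨P, hPdef⟩ : ∃ M : Matrix (Fin n) (Fin n) (AA r), M = Ring.inverse Q := ⟨_, rfl⟩
  rw [← hPdef] at hQgauge
  -- Q is invertible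
  have hu : IsUnit Q := by
    rw [Matrix.isUnit_iff_isUnit_det, MvPowerSeries.isUnit_iff_constantCoeff]
    have h1 := RingHom.map_det (ccA (r := r)) Q
    rw [RingHom.mapMatrix_apply, hQcc, Matrix.det_one] at h1
    have h2 : (MvPowerSeries.constantCoeff : AA r →+* LS) Q.det = 1 := h1
    rw [h2]
    exact isUnit_one
  have hPQ : P * Q = 1 := by rw [hPdef]; exact Ring.inverse_mul_cancel Q hu
  have hQP : Q * P = 1 := by rw [hPdef]; exact Ring.mul_inverse_cancel Q hu
  have hQ0 : coefq Q 0 = 1 := by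
    refine Matrix.ext fun i j => ?_
    have h := congrArg (fun M : Matrix (Fin n) (Fin n) LS => M i j) hQcc
    simp only [Matrix.map_apply] at h
    calc coefq Q 0 i j = (MvPowerSeries.coeff 0) (Q i j) := rfl
      _ = ccA (Q i j) := MvPowerSeries.coeff_zero_eq_constantCoeff_apply _
      _ = (1 : Matrix (Fin n) (Fin n) LS) i j := h
  have hPpoly : MatPolyH P := matPolyH_inverse Q P hQpoly hQ0 hPQ
  have cancel : ∀ X Y : Matrix (Fin n) (Fin n) (AA r), Q * X = Q * Y → X = Y := by
    intro X Y h
    have h2 := congrArg (fun Z => P * Z) h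
    simp only [← mul_assoc, hPQ, one_mul] at h2
    exact h2
  -- the graded Euler derivation
  obtain ⟨E, hEf⟩ : ∃ F : Matrix (Fin n) (Fin n) (AA r) → Matrix (Fin n) (Fin n) (AA r),
      F = fun X => eulerMat w X + ν * X - X * ν := ⟨_, rfl⟩
  have hEX : ∀ X, E X = eulerMat w X + ν * X - X * ν := fun X => by rw [hEf]
  have hEmul : ∀ X Y, E (X * Y) = E X * Y + X * E Y := by
    intro X Y
    simp only [hEX, eulerMat_mul, sub_mul, add_mul, mul_sub, mul_add, mul_assoc]
    abel
  have hEadd : ∀ X Y, E (X + Y) = E X + E Y := by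
    intro X Y
    simp only [hEX, eulerMat_add, mul_add, add_mul]
    abel
  have hEsmul : ∀ X, E (hbarA r • X) = hbarA r • X + hbarA r • X + hbarA r • E X := by
    intro X
    simp only [hEX, eulerMat_smulH, mulH_smul, smulH_mul, smulH_add, smulH_sub]
    abel
  have hEtheta : ∀ (a : Fin r) X, E (thetaMat a X) = thetaMat a (E X) := by
    intro a X
    have h1 : thetaMat a (ν * X) = ν * thetaMat a X := by
      rw [hν, thetaMat_mul, thetaMat_nu, zero_mul, zero_add]
    have h2 : thetaMat a (X * ν) = thetaMat a X * ν := by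
      rw [hν, thetaMat_mul, thetaMat_nu, mul_zero, add_zero]
    rw [hEX, hEX, eulerMat_theta, thetaMat_sub, thetaMat_add, h1, h2]
  -- the gauge-transformed connection matrices
  obtain ⟨Ωh, hΩhf⟩ : ∃ F : Fin r → Matrix (Fin n) (Fin n) (AA r),
      F = fun a => P * Ω a * Q + hbarA r • (P * thetaMat a Q) := ⟨_, rfl⟩
  have hΩha : ∀ a, Ωh a = P * Ω a * Q + hbarA r • (P * thetaMat a Q) := fun a => by rw [hΩhf]
  have hgauge : ∀ a, MatConstH (Ωh a) := fun a => by rw [hΩha a]; exact hQgauge a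
  have hEΩ : ∀ a, E (Ω a) = Ω a + Ω a := fun a => by rw [hEX]; exact hgrade a
  have stepA : ∀ a, Q * Ωh a = Ω a * Q + hbarA r • thetaMat a Q := by
    intro a
    rw [hΩha a, mul_add, ← mul_assoc, ← mul_assoc, hQP, one_mul, mulH_smul, ← mul_assoc,
      hQP, one_mul]
  obtain ⟨D, hDdef⟩ : ∃ M : Matrix (Fin n) (Fin n) (AA r), M = E Q := ⟨_, rfl⟩
  obtain ⟨Tt, hTtdef⟩ : ∃ M : Matrix (Fin n) (Fin n) (AA r), M = P * D := ⟨_, rfl⟩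
  obtain ⟨Rm, hRmf⟩ : ∃ F : Fin r → Matrix (Fin n) (Fin n) (AA r),
      F = fun a => E (Ωh a) - Ωh a - Ωh a := ⟨_, rfl⟩
  have hRma : ∀ a, Rm a = E (Ωh a) - Ωh a - Ωh a := fun a => by rw [hRmf]
  have hDQT : D = Q * Tt := by rw [hTtdef, ← mul_assoc, hQP, one_mul, hDdef]
  have step3 : ∀ a, Ωh a * Tt + hbarA r • thetaMat a Tt = Tt * Ωh a + Rm a := by
    intro a
    have h1 := congrArg E (stepA a)
    rw [hEmul Q (Ωh a), hEadd, hEmul (Ω a) Q, hEΩ a, hEsmul, hEtheta] at h1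
    rw [← hDdef] at h1
    rw [hDQT, thetaMat_mul, smulH_add, add_mul] at h1
    have h1' : Q * E (Ωh a) = (Ω a * Q + Ω a * Q + Ω a * (Q * Tt)
        + (hbarA r • thetaMat a Q + hbarA r • thetaMat a Q
          + (hbarA r • (thetaMat a Q * Tt) + hbarA r • (Q * thetaMat a Tt))))
        - Q * Tt * Ωh a := by
      refine eq_sub_of_add_eq' ?_
      rw [h1]
    refine cancel _ _ ?_
    have e1 : Q * (Ωh a * Tt + hbarA r • thetaMat a Tt)
        = Ω a * (Q * Tt) + (hbarA r • (thetaMat a Q * Tt)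
            + hbarA r • (Q * thetaMat a Tt)) := by
      calc Q * (Ωh a * Tt + hbarA r • thetaMat a Tt)
          = Q * (Ωh a * Tt) + Q * (hbarA r • thetaMat a Tt) := mul_add _ _ _
        _ = (Q * Ωh a) * Tt + hbarA r • (Q * thetaMat a Tt) := by
            rw [← mul_assoc, mulH_smul]
        _ = (Ω a * Q + hbarA r • thetaMat a Q) * Tt + hbarA r • (Q * thetaMat a Tt) := by
            rw [stepA a]
        _ = Ω a * (Q * Tt) + (hbarA r • (thetaMat a Q * Tt)
              + hbarA r • (Q * thetaMat a Tt)) := by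
            rw [add_mul, smulH_mul, mul_assoc]
            abel
    have e2 : Q * (Tt * Ωh a + Rm a)
        = Q * Tt * Ωh a + (Q * E (Ωh a) - (Ω a * Q + hbarA r • thetaMat a Q)
            - (Ω a * Q + hbarA r • thetaMat a Q)) := by
      calc Q * (Tt * Ωh a + Rm a) = Q * (Tt * Ωh a) + Q * Rm a := mul_add _ _ _
        _ = Q * Tt * Ωh a + Q * (E (Ωh a) - Ωh a - Ωh a) := by rw [← mul_assoc, hRma a]
        _ = Q * Tt * Ωh a + (Q * E (Ωh a) - Q * Ωh a - Q * Ωh a) := by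
            rw [mul_sub, mul_sub]
        _ = _ := by rw [stepA a]
    rw [e1, e2, h1']
    abel
  -- hypotheses of the vanishing lemma
  have hDpoly : MatPolyH D := by
    rw [hDdef, hEX, hν]
    exact matPolyH_sub (matPolyH_add (matPolyH_euler w hQpoly) (matPolyH_nu_mul μ hQpoly))
      (matPolyH_mul_nu μ hQpoly)
  have hTtpoly : MatPolyH Tt := by rw [hTtdef]; exact matPolyH_mul hPpoly hDpoly
  have hRmconst : ∀ a, MatConstH (Rm a) := by
    intro a
    rw [hRma a, hEX, hν]
    exact matConstH_sub (matConstH_sub (matConstH_sub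
      (matConstH_add (matConstH_euler w (hgauge a)) (matConstH_nu_mul μ (hgauge a)))
      (matConstH_mul_nu μ (hgauge a))) (hgauge a)) (hgauge a)
  have hD0 : coefq D 0 = 0 := by
    rw [hDdef, hEX]
    rw [coefq_sub, coefq_add, coefq_mul_zero, coefq_mul_zero, hQ0,
      coefq_euler_zero w hQ0, mul_one, one_mul]
    abel
  have hTt0 : coefq Tt 0 = 0 := by
    rw [hTtdef, coefq_mul_zero, hD0, mul_zero]
  have hTtz : Tt = 0 :=
    main_vanish Ωh Rm hgauge hRmconst Tt hTtpoly hTt0 step3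
  have hfin : E Q = 0 := by rw [← hDdef, hDQT, hTtz, mul_zero]
  rw [hEX] at hfin
  exact hfin
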